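/- Let G be a Lie group with a left invariant Riemannian metric and Riemannian distance d. Then for all a, b, g in G, d(ag, bg) ≤ R(g) · d(a,b), where R(g) = ‖(dR_g)_e‖ is the operator norm of the differential of right translation by g at the identity. -/

import Mathlib

/- STATEMENT 2: Let `G` be a Lie group with a left invariant Riemannian metric (determined by an
inner product on the Lie algebra `E = T₁G`) and Riemannian distance `d` (the infimum of lengths
of smooth paths, lengths being measured with the left invariant metric).  Then for all
`a, b, g ∈ G`, `d(ag, bg) ≤ R(g) · d(a,b)`, where `R(g) = ‖(dR_g)_1‖` is the metric operator norm
of the differential at the identity of right translation by `g`, i.e. the operator norm of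
`d(L_{g⁻¹})_g ∘ (dR_g)_1 : E → E`. -/

open scoped Manifold

/-- Length of a path in `G`, measured with the left invariant metric: the norm of the velocity
left-translated to the identity. -/
noncomputable def leftInvPathLength {E : Type*} [NormedAddCommGroup E] [InnerProductSpace ℝ E]
    {G : Type*} [TopologicalSpace G] [ChartedSpace E G] [Group G] [LieGroup 𝓘(ℝ, E) (⊤ : ℕ∞) G]
    (c : ℝ → G) : ℝ :=
  ∫ t in (0:ℝ)..1,
    ‖(show E from mfderiv 𝓘(ℝ, E) 𝓘(ℝ, E) (fun y => (c t)⁻¹ * y) (c t)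
        (mfderiv 𝓘(ℝ, ℝ) 𝓘(ℝ, E) c t (show TangentSpace 𝓘(ℝ, ℝ) t from (1 : ℝ))))‖

/-- The Riemannian distance of the left invariant metric: infimum of lengths of smooth paths. -/
noncomputable def leftInvDist {E : Type*} [NormedAddCommGroup E] [InnerProductSpace ℝ E]
    {G : Type*} [TopologicalSpace G] [ChartedSpace E G] [Group G] [LieGroup 𝓘(ℝ, E) (⊤ : ℕ∞) G]
    (a b : G) : ℝ :=
  sInf {L | ∃ c : ℝ → G, ContMDiff 𝓘(ℝ, ℝ) 𝓘(ℝ, E) 1 c ∧ c 0 = a ∧ c 1 = b ∧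
    L = leftInvPathLength (E := E) c}

/-- `R(g) = ‖(dR_g)_1‖`, the metric operator norm of the differential of right translation. -/
noncomputable def rightTransNorm {E : Type*} [NormedAddCommGroup E] [InnerProductSpace ℝ E]
    {G : Type*} [TopologicalSpace G] [ChartedSpace E G] [Group G] [LieGroup 𝓘(ℝ, E) (⊤ : ℕ∞) G]
    (g : G) : ℝ :=
  ‖(show E →L[ℝ] E from (mfderiv 𝓘(ℝ, E) 𝓘(ℝ, E) (fun y => g⁻¹ * y) g).comp
      (mfderiv 𝓘(ℝ, E) 𝓘(ℝ, E) (fun y => y * g) 1))‖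


section Aux

open Set

variable {E : Type*} [NormedAddCommGroup E] [InnerProductSpace ℝ E]
    {G : Type*} [TopologicalSpace G] [ChartedSpace E G] [Group G] [LieGroup 𝓘(ℝ, E) (⊤ : ℕ∞) G]

/-- velocity of a path, left-translated to the identity -/
noncomputable def vel (c : ℝ → G) (t : ℝ) : E :=
  mfderiv 𝓘(ℝ, E) 𝓘(ℝ, E) (fun y => (c t)⁻¹ * y) (c t)
    (mfderiv 𝓘(ℝ, ℝ) 𝓘(ℝ, E) c t (1 : ℝ))

lemma inTangentCoordinates_one {g' : ℝ → G} (hg' : ∀ t, g' t = 1)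
    (ϕ : ℝ → (ℝ →L[ℝ] E)) (t₀ t : ℝ) :
    inTangentCoordinates 𝓘(ℝ, ℝ) 𝓘(ℝ, E) (id : ℝ → ℝ) g' ϕ t₀ t = ϕ t := by
  rw [inTangentCoordinates_eq (I := 𝓘(ℝ, ℝ)) (I' := 𝓘(ℝ, E)) id g' ϕ
    (by rw [chartAt_self_eq]; exact Set.mem_univ _) (by rw [hg' t, hg' t₀]; exact mem_chart_source _ _)]
  rw [hg' t, hg' t₀]
  ext v
  simp only [ContinuousLinearMap.comp_apply]
  rw [tangentBundleCore_coordChange_model_space]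
  exact (tangentBundleCore 𝓘(ℝ, E) G).coordChange_self (achart E 1) 1
    (mem_achart_source E 1) _

lemma continuous_vel {c : ℝ → G} (hc : ContMDiff 𝓘(ℝ, ℝ) 𝓘(ℝ, E) 1 c) :
    Continuous (vel c : ℝ → E) := by
  have h1 : ContMDiff ((𝓘(ℝ, ℝ)).prod 𝓘(ℝ, ℝ)) 𝓘(ℝ, E) 1
      (fun p : ℝ × ℝ => c p.1) := hc.comp contMDiff_fst
  have h2 : ContMDiff ((𝓘(ℝ, ℝ)).prod 𝓘(ℝ, ℝ)) 𝓘(ℝ, E) 1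
      (fun p : ℝ × ℝ => c p.2) := hc.comp contMDiff_snd
  have hq : ContMDiff ((𝓘(ℝ, ℝ)).prod 𝓘(ℝ, ℝ)) 𝓘(ℝ, E) 1
      (Function.uncurry fun t s => (c t)⁻¹ * c s) := h1.inv.mul h2
  have key : Continuous (X := ℝ) (Y := ℝ →L[ℝ] E)
      (fun t : ℝ => (show ℝ →L[ℝ] E from mfderiv 𝓘(ℝ, ℝ) 𝓘(ℝ, E) (fun s => (c t)⁻¹ * c s) t)) := by
    rw [continuous_iff_continuousAt]
    intro t₀
    have h := ContMDiffAt.mfderiv (x₀ := t₀) (fun t s => (c t)⁻¹ * c s) (id : ℝ → ℝ)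
      (hq.contMDiffAt) (contMDiffAt_id (n := 0)) (by norm_num)
    have h2 := h.continuousAt
    have he : (inTangentCoordinates 𝓘(ℝ, ℝ) 𝓘(ℝ, E) (id : ℝ → ℝ)
        (fun x => (c x)⁻¹ * c (id x))
        (fun x => mfderiv 𝓘(ℝ, ℝ) 𝓘(ℝ, E) (fun s => (c x)⁻¹ * c s) (id x)) t₀)
        = fun x => mfderiv 𝓘(ℝ, ℝ) 𝓘(ℝ, E) (fun s => (c x)⁻¹ * c s) x := by
      funext t
      exact inTangentCoordinates_one (fun u => inv_mul_cancel (c u)) _ t₀ t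
    rw [he] at h2
    exact h2
  have hv : ∀ t : ℝ, (vel c t : E) =
      (show ℝ →L[ℝ] E from mfderiv 𝓘(ℝ, ℝ) 𝓘(ℝ, E) (fun s => (c t)⁻¹ * c s) t) (1 : ℝ) := by
    intro t
    have hcomp := mfderiv_comp (I := 𝓘(ℝ, ℝ)) (I' := 𝓘(ℝ, E)) (I'' := 𝓘(ℝ, E)) t
      (mdifferentiableAt_mul_left (a := (c t)⁻¹) (b := c t))
      (hc.mdifferentiableAt one_ne_zero)
    exact (DFunLike.congr_fun hcomp.symm (show TangentSpace 𝓘(ℝ, ℝ) t from (1 : ℝ)) : _)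
  have final := ((ContinuousLinearMap.apply ℝ E (1 : ℝ)).continuous).comp key
  exact final.congr fun t => (hv t).symm

omit [LieGroup 𝓘(ℝ, E) (⊤ : ℕ∞) G] in
lemma mfderivCongrPoint {f : G → G} {x y : G} (h : x = y) :
    (mfderiv 𝓘(ℝ, E) 𝓘(ℝ, E) f x : E →L[ℝ] E) = mfderiv 𝓘(ℝ, E) 𝓘(ℝ, E) f y := by
  subst h; rfl

omit [LieGroup 𝓘(ℝ, E) (⊤ : ℕ∞) G] in
lemma mfderivCongrFun {f g : G → G} (h : f = g) (x : G) :
    (mfderiv 𝓘(ℝ, E) 𝓘(ℝ, E) f x : E →L[ℝ] E) = mfderiv 𝓘(ℝ, E) 𝓘(ℝ, E) g x := by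
  subst h; rfl

lemma vel_mul {c : ℝ → G} (hc : ContMDiff 𝓘(ℝ, ℝ) 𝓘(ℝ, E) 1 c) (g : G) (t : ℝ) :
    (vel (fun s => c s * g) t : E) =
      ((mfderiv 𝓘(ℝ, E) 𝓘(ℝ, E) (fun y => g⁻¹ * y) g).comp
        (mfderiv 𝓘(ℝ, E) 𝓘(ℝ, E) (fun y => y * g) 1)) (vel c t : E) := by
  have hmc : MDifferentiableAt 𝓘(ℝ, ℝ) 𝓘(ℝ, E) c t := hc.mdifferentiableAt one_ne_zero
  -- u1 : the raw velocity
  -- step 1 : derivative of c * g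
  have h1 := mfderiv_comp (I := 𝓘(ℝ, ℝ)) (I' := 𝓘(ℝ, E)) (I'' := 𝓘(ℝ, E)) t
    (mdifferentiableAt_mul_right (a := g) (b := c t)) hmc
  have key1 : (mfderiv 𝓘(ℝ, ℝ) 𝓘(ℝ, E) (fun s => c s * g) t
        (show TangentSpace 𝓘(ℝ, ℝ) t from (1 : ℝ)) : E)
      = mfderiv 𝓘(ℝ, E) 𝓘(ℝ, E) (fun y => y * g) (c t)
          (mfderiv 𝓘(ℝ, ℝ) 𝓘(ℝ, E) c t (show TangentSpace 𝓘(ℝ, ℝ) t from (1 : ℝ))) :=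
    DFunLike.congr_fun h1 _
  -- abbreviations (as plain terms)
  have h2 := mfderiv_comp (I := 𝓘(ℝ, E)) (I' := 𝓘(ℝ, E)) (I'' := 𝓘(ℝ, E)) (x := c t)
    (mdifferentiableAt_mul_left (a := (c t * g)⁻¹) (b := c t * g))
    (mdifferentiableAt_mul_right (a := g) (b := c t))
  have hfun : ((fun y => (c t * g)⁻¹ * y) ∘ (fun y => y * g)) =
      ((fun y => g⁻¹ * y) ∘ ((fun y => y * g) ∘ (fun y => (c t)⁻¹ * y)) : G → G) := by
    funext y
    simp only [Function.comp_apply, mul_inv_rev]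
    group
  have h3 := mfderiv_comp (I := 𝓘(ℝ, E)) (I' := 𝓘(ℝ, E)) (I'' := 𝓘(ℝ, E)) (x := c t)
    (mdifferentiableAt_mul_left (a := g⁻¹) (b := ((fun y => y * g) ∘ (fun y => (c t)⁻¹ * y)) (c t)))
    ((mdifferentiableAt_mul_right (a := g) (b := (fun y => (c t)⁻¹ * y) (c t))).comp (c t)
      (mdifferentiableAt_mul_left (a := (c t)⁻¹) (b := c t)))
  have h4 := mfderiv_comp (I := 𝓘(ℝ, E)) (I' := 𝓘(ℝ, E)) (I'' := 𝓘(ℝ, E)) (x := c t)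
    (mdifferentiableAt_mul_right (a := g) (b := (fun y => (c t)⁻¹ * y) (c t)))
    (mdifferentiableAt_mul_left (a := (c t)⁻¹) (b := c t))
  set u1 : E := mfderiv 𝓘(ℝ, ℝ) 𝓘(ℝ, E) c t (show TangentSpace 𝓘(ℝ, ℝ) t from (1 : ℝ)) with hu1
  have hb1 : ((fun y => y * g) ∘ (fun y => (c t)⁻¹ * y)) (c t) = g := by simp
  have hb2 : ((fun y => (c t)⁻¹ * y) (c t) : G) = 1 := by simp
  calc (vel (fun s => c s * g) t : E)
      = (show E from mfderiv 𝓘(ℝ, E) 𝓘(ℝ, E) (fun y => (c t * g)⁻¹ * y) (c t * g)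
          (mfderiv 𝓘(ℝ, E) 𝓘(ℝ, E) (fun y => y * g) (c t) u1)) := by
        exact congrArg _ key1
    _ = (show E from (mfderiv 𝓘(ℝ, E) 𝓘(ℝ, E) ((fun y => (c t * g)⁻¹ * y) ∘ (fun y => y * g)) (c t) :
          E →L[ℝ] E) u1) := (DFunLike.congr_fun h2 u1).symm
    _ = (show E from (mfderiv 𝓘(ℝ, E) 𝓘(ℝ, E)
          ((fun y => g⁻¹ * y) ∘ ((fun y => y * g) ∘ (fun y => (c t)⁻¹ * y))) (c t) :
          E →L[ℝ] E) u1) := DFunLike.congr_fun (mfderivCongrFun hfun (c t)) u1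
    _ = (show E from mfderiv 𝓘(ℝ, E) 𝓘(ℝ, E) (fun y => g⁻¹ * y)
          (((fun y => y * g) ∘ (fun y => (c t)⁻¹ * y)) (c t))
          ((mfderiv 𝓘(ℝ, E) 𝓘(ℝ, E) ((fun y => y * g) ∘ (fun y => (c t)⁻¹ * y)) (c t) :
            E →L[ℝ] E) u1)) := DFunLike.congr_fun h3 u1
    _ = (show E from mfderiv 𝓘(ℝ, E) 𝓘(ℝ, E) (fun y => g⁻¹ * y) g
          ((mfderiv 𝓘(ℝ, E) 𝓘(ℝ, E) ((fun y => y * g) ∘ (fun y => (c t)⁻¹ * y)) (c t) :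
            E →L[ℝ] E) u1)) := by
        exact congrArg (fun b : G => (mfderiv 𝓘(ℝ, E) 𝓘(ℝ, E) (fun y => g⁻¹ * y) b : E →L[ℝ] E)
          ((mfderiv 𝓘(ℝ, E) 𝓘(ℝ, E) ((fun y => y * g) ∘ (fun y => (c t)⁻¹ * y)) (c t) :
            E →L[ℝ] E) u1)) hb1
    _ = (show E from mfderiv 𝓘(ℝ, E) 𝓘(ℝ, E) (fun y => g⁻¹ * y) g
          (mfderiv 𝓘(ℝ, E) 𝓘(ℝ, E) (fun y => y * g) ((fun y => (c t)⁻¹ * y) (c t))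
            (mfderiv 𝓘(ℝ, E) 𝓘(ℝ, E) (fun y => (c t)⁻¹ * y) (c t) u1))) := by
        exact congrArg _ (DFunLike.congr_fun h4 u1)
    _ = (show E from mfderiv 𝓘(ℝ, E) 𝓘(ℝ, E) (fun y => g⁻¹ * y) g
          (mfderiv 𝓘(ℝ, E) 𝓘(ℝ, E) (fun y => y * g) (1 : G)
            (mfderiv 𝓘(ℝ, E) 𝓘(ℝ, E) (fun y => (c t)⁻¹ * y) (c t) u1))) := by
        exact congrArg (fun b : G => (mfderiv 𝓘(ℝ, E) 𝓘(ℝ, E) (fun y => g⁻¹ * y) g : E →L[ℝ] E)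
          ((mfderiv 𝓘(ℝ, E) 𝓘(ℝ, E) (fun y => y * g) b : E →L[ℝ] E)
            ((mfderiv 𝓘(ℝ, E) 𝓘(ℝ, E) (fun y => (c t)⁻¹ * y) (c t) : E →L[ℝ] E) u1))) hb2
    _ = (show E from ((mfderiv 𝓘(ℝ, E) 𝓘(ℝ, E) (fun y => g⁻¹ * y) g).comp
          (mfderiv 𝓘(ℝ, E) 𝓘(ℝ, E) (fun y => y * g) 1)) (vel c t : E)) := rfl

lemma leftInvPathLength_eq (c : ℝ → G) :
    leftInvPathLength (E := E) c = ∫ t in (0:ℝ)..1, ‖(vel c t : E)‖ := rfl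

lemma leftInvPathLength_nonneg (c : ℝ → G) : 0 ≤ leftInvPathLength (E := E) c :=
  intervalIntegral.integral_nonneg zero_le_one fun _ _ => norm_nonneg _

lemma length_mul_le {c : ℝ → G} (hc : ContMDiff 𝓘(ℝ, ℝ) 𝓘(ℝ, E) 1 c) (g : G) :
    leftInvPathLength (E := E) (fun t => c t * g) ≤
      ‖(show E →L[ℝ] E from (mfderiv 𝓘(ℝ, E) 𝓘(ℝ, E) (fun y => g⁻¹ * y) g).comp
        (mfderiv 𝓘(ℝ, E) 𝓘(ℝ, E) (fun y => y * g) 1))‖ * leftInvPathLength (E := E) c := by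
  set T : E →L[ℝ] E := (mfderiv 𝓘(ℝ, E) 𝓘(ℝ, E) (fun y => g⁻¹ * y) g).comp
    (mfderiv 𝓘(ℝ, E) 𝓘(ℝ, E) (fun y => y * g) 1) with hT
  have hvm : ∀ t : ℝ, (vel (fun s => c s * g) t : E) = T (vel c t) := vel_mul hc g
  have hv : Continuous (vel c : ℝ → E) := continuous_vel hc
  rw [leftInvPathLength_eq, leftInvPathLength_eq]
  calc (∫ t in (0:ℝ)..1, ‖(vel (fun s => c s * g) t : E)‖)
      = ∫ t in (0:ℝ)..1, ‖T (vel c t)‖ := by simp_rw [hvm]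
    _ ≤ ∫ t in (0:ℝ)..1, ‖T‖ * ‖(vel c t : E)‖ := by
        apply intervalIntegral.integral_mono_on zero_le_one
        · exact ((T.continuous.comp hv).norm).intervalIntegrable _ _
        · exact (continuous_const.mul hv.norm).intervalIntegrable _ _
        · intro u _
          exact T.le_opNorm _
    _ = ‖T‖ * ∫ t in (0:ℝ)..1, ‖(vel c t : E)‖ := intervalIntegral.integral_const_mul _ _

open Pointwise in
theorem dist_mul_right_le' (a b g : G) :
    sInf {L | ∃ c : ℝ → G, ContMDiff 𝓘(ℝ, ℝ) 𝓘(ℝ, E) 1 c ∧ c 0 = a * g ∧ c 1 = b * g ∧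
        L = leftInvPathLength (E := E) c} ≤
      ‖(show E →L[ℝ] E from (mfderiv 𝓘(ℝ, E) 𝓘(ℝ, E) (fun y => g⁻¹ * y) g).comp
        (mfderiv 𝓘(ℝ, E) 𝓘(ℝ, E) (fun y => y * g) 1))‖ *
      sInf {L | ∃ c : ℝ → G, ContMDiff 𝓘(ℝ, ℝ) 𝓘(ℝ, E) 1 c ∧ c 0 = a ∧ c 1 = b ∧
        L = leftInvPathLength (E := E) c} := by
  set R : ℝ := ‖(show E →L[ℝ] E from (mfderiv 𝓘(ℝ, E) 𝓘(ℝ, E) (fun y => g⁻¹ * y) g).comp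
    (mfderiv 𝓘(ℝ, E) 𝓘(ℝ, E) (fun y => y * g) 1))‖ with hR
  have hR0 : 0 ≤ R := norm_nonneg _
  set S : Set ℝ := {L | ∃ c : ℝ → G, ContMDiff 𝓘(ℝ, ℝ) 𝓘(ℝ, E) 1 c ∧ c 0 = a ∧ c 1 = b ∧
    L = leftInvPathLength (E := E) c} with hS
  set S' : Set ℝ := {L | ∃ c : ℝ → G, ContMDiff 𝓘(ℝ, ℝ) 𝓘(ℝ, E) 1 c ∧ c 0 = a * g ∧
    c 1 = b * g ∧ L = leftInvPathLength (E := E) c} with hS'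
  by_cases hne : S.Nonempty
  · have hbdd' : BddBelow S' := by
      refine ⟨0, ?_⟩
      rintro L ⟨c, -, -, -, rfl⟩
      exact leftInvPathLength_nonneg c
    have key : ∀ L ∈ S, sInf S' ≤ R * L := by
      rintro L ⟨c, hc, hc0, hc1, rfl⟩
      have mem' : leftInvPathLength (E := E) (fun t => c t * g) ∈ S' := by
        refine ⟨fun t => c t * g, ?_, by simp only [hc0], by simp only [hc1], rfl⟩
        exact contMDiff_mul_right.comp hc
      exact le_trans (csInf_le hbdd' mem') (length_mul_le hc g)
    calc sInf S' ≤ sInf (R • S) := by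
          refine le_csInf (hne.smul_set) ?_
          rintro x ⟨L, hL, rfl⟩
          simpa [smul_eq_mul] using key L hL
      _ = R • sInf S := Real.sInf_smul_of_nonneg hR0 S
      _ = R * sInf S := rfl
  · have hne' : ¬ S'.Nonempty := by
      rintro ⟨L, c', hc', h0', h1', rfl⟩
      refine hne ⟨leftInvPathLength (E := E) (fun t => c' t * g⁻¹),
        fun t => c' t * g⁻¹, ?_, by simp [h0'], by simp [h1'], rfl⟩
      exact contMDiff_mul_right.comp hc'
    rw [Set.not_nonempty_iff_eq_empty] at hne hne'
    rw [hne, hne', Real.sInf_empty, mul_zero]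

end Aux

theorem dist_mul_right_le {E : Type*} [NormedAddCommGroup E] [InnerProductSpace ℝ E]
    {G : Type*} [TopologicalSpace G] [ChartedSpace E G] [Group G] [LieGroup 𝓘(ℝ, E) (⊤ : ℕ∞) G]
    (a b g : G) :
    leftInvDist (E := E) (a * g) (b * g) ≤ rightTransNorm (E := E) g * leftInvDist (E := E) a b := by
  exact dist_mul_right_le' (E := E) a b g
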